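/- For every finite abelian group G, s(G) ≤ |G| + exp(G) − 1. -/

import Mathlib

/-- The `m`-th Davenport constant: smallest `t` such that every sequence (multiset) over `G`
of length `≥ t` contains `m` disjoint non-empty zero-sum subsequences. -/
noncomputable def DavenportM (G : Type*) [AddCommGroup G] (m : ℕ) : ℕ :=
  sInf {t | ∀ S : Multiset G, t ≤ Multiset.card S →
    ∃ L : Multiset (Multiset G), Multiset.card L = m ∧
      (∀ T ∈ L, T ≠ 0 ∧ T.sum = 0) ∧ L.sum ≤ S}

/-- The Davenport constant: smallest `t` such that every sequence over `G` of length `≥ t`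
has a non-empty zero-sum subsequence. -/
noncomputable def Davenport (G : Type*) [AddCommGroup G] : ℕ :=
  sInf {t | ∀ S : Multiset G, t ≤ Multiset.card S → ∃ T ≤ S, T ≠ 0 ∧ T.sum = 0}

/-- `η(G)`: smallest `t` such that every sequence over `G` of length `≥ t` has a non-empty
zero-sum subsequence of length at most `exp G`. -/
noncomputable def etaC (G : Type*) [AddCommGroup G] : ℕ :=
  sInf {t | ∀ S : Multiset G, t ≤ Multiset.card S →
    ∃ T ≤ S, T ≠ 0 ∧ T.sum = 0 ∧ Multiset.card T ≤ AddMonoid.exponent G}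

/-- The Erdős–Ginzburg–Ziv constant `s(G)`: smallest `t` such that every sequence over `G` of
length `≥ t` has a zero-sum subsequence of length exactly `exp G`. -/
noncomputable def egz (G : Type*) [AddCommGroup G] : ℕ :=
  sInf {t | ∀ S : Multiset G, t ≤ Multiset.card S →
    ∃ T ≤ S, T.sum = 0 ∧ Multiset.card T = AddMonoid.exponent G}

open Finset Pointwise

section Scherk

variable {G : Type*} [AddCommGroup G] [Fintype G] [DecidableEq G]

/-- Auxiliary form of the Kemperman–Scherk theorem, with an induction fuel `k` bounding `#B`. -/
private lemma scherk_aux : ∀ (k : ℕ) (A B : Finset G), B.card ≤ k → (0:G) ∈ A → (0:G) ∈ B →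
    (∀ a ∈ A, ∀ b ∈ B, a + b = 0 → a = 0) → A.card + B.card ≤ (A + B).card + 1 := by
  intro k
  induction k with
  | zero =>
    intro A B hk _ hB _
    have : 0 < B.card := Finset.card_pos.2 ⟨0, hB⟩
    omega
  | succ k ih =>
    intro A B hk hA hB hU
    by_cases hstall : ∀ e ∈ A, e ≠ 0 → ∀ b ∈ B, e + b ∈ A
    · -- stalled case : `A + B = A ∪ B` and `A ∩ B = {0}`.
      have hAB : A + B = A ∪ B := by
        apply Finset.Subset.antisymm
        · intro x hx
          rw [Finset.mem_add] at hx
          obtain ⟨a, ha, b, hb, rfl⟩ := hx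
          by_cases ha0 : a = 0
          · subst ha0; rw [zero_add]; exact Finset.mem_union_right _ hb
          · exact Finset.mem_union_left _ (hstall a ha ha0 b hb)
        · intro x hx
          rcases Finset.mem_union.1 hx with h | h
          · have := Finset.add_mem_add h hB; simpa using this
          · have := Finset.add_mem_add hA h; simpa using this
      have hint : A ∩ B = {0} := by
        apply Finset.Subset.antisymm
        · intro c hc
          rw [Finset.mem_inter] at hc
          rw [Finset.mem_singleton]
          by_contra hc0
          have hq1 : addOrderOf c ≠ 1 := by
            simpa [AddMonoid.addOrderOf_eq_one_iff] using hc0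
          have hqpos : 0 < addOrderOf c := addOrderOf_pos c
          have chain : ∀ j, 1 ≤ j → j < addOrderOf c → j • c ∈ A := by
            intro j
            induction j with
            | zero => omega
            | succ j ihj =>
              intro _ hlt
              by_cases hj : j = 0
              · subst hj; simpa using hc.1
              · have hjA : j • c ∈ A := ihj (by omega) (by omega)
                have hj0 : j • c ≠ 0 := by
                  intro hz
                  have hdvd := addOrderOf_dvd_of_nsmul_eq_zero hz
                  have := Nat.le_of_dvd (by omega) hdvd
                  omega
                have := hstall _ hjA hj0 c hc.2
                rwa [succ_nsmul]
          have hmem : (addOrderOf c - 1) • c ∈ A := chain _ (by omega) (by omega)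
          have hsum : (addOrderOf c - 1) • c + c = 0 := by
            have h1 : (addOrderOf c - 1) • c + c = (addOrderOf c - 1 + 1) • c := by
              rw [succ_nsmul]
            have h2 : addOrderOf c - 1 + 1 = addOrderOf c := by omega
            rw [h1, h2, addOrderOf_nsmul_eq_zero]
          have hzero := hU _ hmem c hc.2 hsum
          have hdvd := addOrderOf_dvd_of_nsmul_eq_zero hzero
          have := Nat.le_of_dvd (by omega) hdvd
          omega
        · intro x hx
          rw [Finset.mem_singleton] at hx
          subst hx
          exact Finset.mem_inter.2 ⟨hA, hB⟩
      have hcui := Finset.card_union_add_card_inter A B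
      rw [hint, Finset.card_singleton] at hcui
      rw [hAB]
      omega
    · -- transform case
      push_neg at hstall
      obtain ⟨e, heA, he0, b0, hb0B, hb0⟩ := hstall
      set T : Finset G := B.image (fun x => e + x) with hT
      set D1 : Finset G := A ∪ T with hD1
      set D2 : Finset G := B ∩ (A.image (fun x => -e + x)) with hD2
      have hinj : Function.Injective (fun x : G => e + x) := fun x y h => by simpa using h
      have hD2B : D2 ⊆ B := Finset.inter_subset_left
      have hb0D2 : b0 ∉ D2 := by
        intro h
        rw [hD2, Finset.mem_inter, Finset.mem_image] at h
        obtain ⟨-, a, haA, ha⟩ := h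
        apply hb0
        have hkey : e + b0 = a := by rw [← ha]; abel
        rwa [hkey]
      have hcardD2 : D2.card < B.card :=
        Finset.card_lt_card ⟨hD2B, fun hBD2 => hb0D2 (hBD2 hb0B)⟩
      have himg : D2.image (fun x => e + x) = T ∩ A := by
        rw [hD2, Finset.image_inter _ _ hinj]
        congr 1
        rw [Finset.image_image]
        have hfun : ((fun x : G => e + x) ∘ fun x : G => -e + x) = id := by
          funext x; simp
        rw [hfun, Finset.image_id]
      have hcards : D1.card + D2.card = A.card + B.card := by
        have h2 : D2.card = (T ∩ A).card := by
          rw [← himg, Finset.card_image_of_injective _ hinj]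
        have hTcard : T.card = B.card := Finset.card_image_of_injective _ hinj
        have hcui := Finset.card_union_add_card_inter A T
        have hcomm : (T ∩ A).card = (A ∩ T).card := by rw [Finset.inter_comm]
        rw [hD1, h2]
        omega
      have hsub : D1 + D2 ⊆ A + B := by
        intro x hx
        rw [Finset.mem_add] at hx
        obtain ⟨y, hy, z, hz, rfl⟩ := hx
        rw [hD2, Finset.mem_inter, Finset.mem_image] at hz
        obtain ⟨hzB, a0, ha0, hz2⟩ := hz
        rcases Finset.mem_union.1 hy with hyA | hyT
        · exact Finset.add_mem_add hyA hzB
        · rw [hT, Finset.mem_image] at hyT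
          obtain ⟨b1, hb1, rfl⟩ := hyT
          have hkey : (e + b1) + z = a0 + b1 := by rw [← hz2]; abel
          rw [hkey]
          exact Finset.add_mem_add ha0 hb1
      have h0D1 : (0:G) ∈ D1 := Finset.mem_union_left _ hA
      have h0D2 : (0:G) ∈ D2 :=
        Finset.mem_inter.2 ⟨hB, Finset.mem_image.2 ⟨e, heA, by simp⟩⟩
      have hU' : ∀ a ∈ D1, ∀ b ∈ D2, a + b = 0 → a = 0 := by
        intro x hx y hy hxy
        rw [hD2, Finset.mem_inter, Finset.mem_image] at hy
        obtain ⟨hyB, a0, ha0A, hy2⟩ := hy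
        rcases Finset.mem_union.1 hx with hxA | hxT
        · exact hU x hxA y hyB hxy
        · exfalso
          rw [hT, Finset.mem_image] at hxT
          obtain ⟨b1, hb1B, rfl⟩ := hxT
          have hsum : a0 + b1 = 0 := by
            have : (e + b1) + (-e + a0) = a0 + b1 := by abel
            rw [← hy2] at hxy
            rw [← this]; exact hxy
          have ha00 : a0 = 0 := hU a0 ha0A b1 hb1B hsum
          have hyne : y = -e := by rw [← hy2, ha00]; simp
          have heB : -e ∈ B := hyne ▸ hyB
          exact he0 (hU e heA (-e) heB (by simp))
      have hIH := ih D1 D2 (by omega) h0D1 h0D2 hU'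
      have hle := Finset.card_le_card hsub
      omega

/-- The **Kemperman–Scherk theorem**: if `0 ∈ A ∩ B` and the only representation of `0` as a sum
`a + b` with `a ∈ A`, `b ∈ B` is `0 + 0`, then `|A + B| ≥ |A| + |B| - 1`. -/
lemma scherk (A B : Finset G) (hA : (0:G) ∈ A) (hB : (0:G) ∈ B)
    (hU : ∀ a ∈ A, ∀ b ∈ B, a + b = 0 → a = 0) :
    A.card + B.card ≤ (A + B).card + 1 :=
  scherk_aux B.card A B le_rfl hA hB hU

end Scherk

section LemmaA

open scoped Classical in
/-- The set of values of sums of non-empty subsequences of `S` of length at most `i`. -/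
noncomputable def subsums {G : Type*} [AddCommGroup G] [Fintype G] (S : Multiset G) (i : ℕ) :
    Finset G :=
  Finset.univ.filter (fun g => ∃ T : Multiset G, T ≤ S ∧ T ≠ 0 ∧ Multiset.card T ≤ i ∧ T.sum = g)

variable {G : Type*} [AddCommGroup G] [Fintype G] [DecidableEq G]

lemma mem_subsums {S : Multiset G} {i : ℕ} {g : G} :
    g ∈ subsums S i ↔ ∃ T : Multiset G, T ≤ S ∧ T ≠ 0 ∧ Multiset.card T ≤ i ∧ T.sum = g := by
  classical
  simp [subsums]

lemma claimE (S : Multiset G) (h : ℕ)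
    (hno : ¬ ∃ T : Multiset G, T ≤ S ∧ T ≠ 0 ∧ Multiset.card T ≤ h ∧ T.sum = 0) :
    ∀ i, i ≤ h →
      1 + ∑ j ∈ Finset.Icc 1 i, (S.toFinset.filter (fun a => j ≤ S.count a)).card
        ≤ (insert (0:G) (subsums S i)).card := by
  intro i
  induction i with
  | zero =>
    intro _
    simp only [Finset.Icc_self, Finset.Icc_eq_empty_of_lt (by omega : (1:ℕ) > 0)]
    simp only [Finset.sum_empty, add_zero]
    exact Finset.card_pos.2 ⟨0, Finset.mem_insert_self _ _⟩
  | succ i ihi =>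
    intro hih
    set A : Finset G := S.toFinset.filter (fun a => i + 1 ≤ S.count a) with hAdef
    -- `0 ∉ A`, else `{0}` is a short zero-sum subsequence.
    have h0A : (0:G) ∉ A := by
      intro h0
      rw [hAdef, Finset.mem_filter] at h0
      refine hno ⟨{0}, ?_, by simp, by simp; omega, by simp⟩
      rw [Multiset.singleton_le]
      exact Multiset.mem_toFinset.1 h0.1
    -- a cons construction
    have hcons : ∀ b ∈ A, ∀ T : Multiset G, T ≤ S → Multiset.card T ≤ i → (b ::ₘ T) ≤ S := by
      intro b hb T hTS hTcard
      rw [hAdef, Finset.mem_filter] at hb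
      rw [Multiset.le_iff_count]
      intro x
      rw [Multiset.count_cons]
      by_cases hx : x = b
      · subst hx
        have h1 : T.count x ≤ Multiset.card T := Multiset.count_le_card x T
        have h2 : i + 1 ≤ S.count x := hb.2
        rw [if_pos rfl]
        omega
      · simp only [if_neg hx, add_zero]
        exact Multiset.le_iff_count.1 hTS x
    -- Scherk hypothesis
    have hU : ∀ a ∈ insert (0:G) (subsums S i), ∀ b ∈ insert (0:G) A, a + b = 0 → a = 0 := by
      intro y hy b hb hyb
      rcases Finset.mem_insert.1 hb with rfl | hbA
      · rwa [add_zero] at hyb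
      rcases Finset.mem_insert.1 hy with rfl | hyX
      · rfl
      exfalso
      rw [mem_subsums] at hyX
      obtain ⟨T, hTS, hTne, hTcard, hTsum⟩ := hyX
      refine hno ⟨b ::ₘ T, hcons b hbA T hTS (by omega), by simp, ?_, ?_⟩
      · rw [Multiset.card_cons]; omega
      · rw [Multiset.sum_cons, hTsum, add_comm]; exact hyb
    -- sumset inclusion
    have key : (insert (0:G) (subsums S i)) + (insert 0 A) ⊆ insert (0:G) (subsums S (i+1)) := by
      intro x hx
      rw [Finset.mem_add] at hx
      obtain ⟨y, hy, b, hb, rfl⟩ := hx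
      rcases Finset.mem_insert.1 hb with rfl | hbA
      · rcases Finset.mem_insert.1 hy with rfl | hyX
        · simp
        · rw [mem_subsums] at hyX
          obtain ⟨T, hTS, hTne, hTcard, hTsum⟩ := hyX
          rw [add_zero]
          exact Finset.mem_insert_of_mem
            (mem_subsums.2 ⟨T, hTS, hTne, by omega, hTsum⟩)
      · rcases Finset.mem_insert.1 hy with rfl | hyX
        · rw [zero_add]
          refine Finset.mem_insert_of_mem (mem_subsums.2 ⟨{b}, ?_, by simp, by simp, by simp⟩)
          rw [Multiset.singleton_le]
          rw [hAdef, Finset.mem_filter] at hbA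
          exact Multiset.mem_toFinset.1 hbA.1
        · rw [mem_subsums] at hyX
          obtain ⟨T, hTS, hTne, hTcard, hTsum⟩ := hyX
          refine Finset.mem_insert_of_mem (mem_subsums.2 ⟨b ::ₘ T, hcons b hbA T hTS hTcard,
            by simp, by rw [Multiset.card_cons]; omega, ?_⟩)
          rw [Multiset.sum_cons, hTsum, add_comm]
    have hS := scherk (insert (0:G) (subsums S i)) (insert 0 A)
      (Finset.mem_insert_self _ _) (Finset.mem_insert_self _ _) hU
    have hsubcard := Finset.card_le_card key
    have hcardB : (insert (0:G) A).card = A.card + 1 := Finset.card_insert_of_notMem h0A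
    have hmono := ihi (by omega)
    rw [Finset.sum_Icc_succ_top (by omega : 1 ≤ i + 1)]
    rw [← hAdef]
    omega

/-- Key lemma: a sequence of length at least `|G|` over a finite abelian group `G` has a
non-empty zero-sum subsequence of length at most the maximal multiplicity bound `v`. -/
lemma lemmaA (S : Multiset G) (v : ℕ) (hv : ∀ a : G, S.count a ≤ v)
    (hcard : Fintype.card G ≤ Multiset.card S) :
    ∃ T : Multiset G, T ≤ S ∧ T ≠ 0 ∧ Multiset.card T ≤ v ∧ T.sum = 0 := by
  by_contra hno
  have hE := claimE S v hno v le_rfl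
  have hsum : ∑ j ∈ Finset.Icc 1 v, (S.toFinset.filter (fun a => j ≤ S.count a)).card
      = Multiset.card S := by
    have hstep : ∀ j, (S.toFinset.filter (fun a => j ≤ S.count a)).card
        = ∑ a ∈ S.toFinset, if j ≤ S.count a then 1 else 0 := by
      intro j
      rw [Finset.card_filter]
    rw [Finset.sum_congr rfl (fun j _ => hstep j), Finset.sum_comm]
    have hinner : ∀ a ∈ S.toFinset,
        (∑ j ∈ Finset.Icc 1 v, if j ≤ S.count a then 1 else 0) = S.count a := by
      intro a _
      rw [← Finset.card_filter]
      have hfil : (Finset.Icc 1 v).filter (fun j => j ≤ S.count a)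
          = Finset.Icc 1 (S.count a) := by
        ext j
        simp only [Finset.mem_filter, Finset.mem_Icc]
        have := hv a
        omega
      rw [hfil, Nat.card_Icc]
      omega
    rw [Finset.sum_congr rfl hinner, Multiset.toFinset_sum_count_eq]
  have hle : (insert (0:G) (subsums S v)).card ≤ Fintype.card G :=
    Finset.card_le_univ _
  omega

end LemmaA

section Main

variable {G : Type*} [AddCommGroup G] [Fintype G] [DecidableEq G]

private lemma sum_map_add_const (T : Multiset G) (c : G) :
    (T.map (fun x => x + c)).sum = T.sum + (Multiset.card T) • c := by
  induction T using Multiset.induction with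
  | empty => simp
  | cons a T ih =>
    simp only [Multiset.map_cons, Multiset.sum_cons, Multiset.card_cons, ih, succ_nsmul]
    abel

lemma egz_membership (S : Multiset G)
    (hS : Fintype.card G + AddMonoid.exponent G - 1 ≤ Multiset.card S) :
    ∃ T ≤ S, T.sum = 0 ∧ Multiset.card T = AddMonoid.exponent G := by
  set n := AddMonoid.exponent G with hn_def
  set m := Fintype.card G with hm_def
  have hn : 0 < n := Nat.pos_of_ne_zero AddMonoid.exponent_ne_zero_of_finite
  have hm : 0 < m := Fintype.card_pos
  have hcard : m + n - 1 ≤ Multiset.card S := hS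
  have hSne : S.toFinset.Nonempty := by
    rw [Multiset.toFinset_nonempty]
    intro h
    rw [h] at hcard
    simp at hcard
    omega
  obtain ⟨c, hcmem, hcmax⟩ := S.toFinset.exists_max_image (fun a => S.count a) hSne
  set v := S.count c with hv_def
  have hvmax : ∀ x : G, S.count x ≤ v := by
    intro x
    by_cases hx : x ∈ S.toFinset
    · exact hcmax x hx
    · rw [Multiset.count_eq_zero_of_notMem (fun hmem => hx (Multiset.mem_toFinset.2 hmem))]
      exact Nat.zero_le _
  have hv1 : 1 ≤ v := Multiset.count_pos.2 (Multiset.mem_toFinset.1 hcmem)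
  by_cases hvn : n ≤ v
  · refine ⟨Multiset.replicate n c, Multiset.le_count_iff_replicate_le.1 (by omega), ?_, ?_⟩
    · rw [Multiset.sum_replicate, hn_def]
      exact AddMonoid.exponent_nsmul_eq_zero c
    · rw [Multiset.card_replicate]
  · push_neg at hvn
    set S' : Multiset G := S.map (fun x => x - c) with hS'
    have hinj : Function.Injective (fun y : G => y - c) := by
      intro a b hab
      simpa using hab
    have hcount' : ∀ x : G, S'.count x = S.count (x + c) := by
      intro x
      have hx : x = (fun y : G => y - c) (x + c) := by simp
      rw [hS']
      conv_lhs => rw [hx]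
      rw [Multiset.count_map_eq_count' _ _ hinj]
    have hzero' : S'.count 0 = v := by
      rw [hcount', zero_add, hv_def]
    have hmax' : ∀ x, S'.count x ≤ v := fun x => by rw [hcount']; exact hvmax _
    have hcardS' : Multiset.card S' = Multiset.card S := by rw [hS', Multiset.card_map]
    set R : Multiset G := S'.filter (fun x => ¬ (x = 0)) with hR
    have hRle : R ≤ S' := Multiset.filter_le _ _
    have hcountR0 : R.count 0 = 0 := by
      rw [hR, Multiset.count_filter]
      simp
    have hcountRne : ∀ x : G, x ≠ 0 → R.count x = S'.count x := by
      intro x hx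
      rw [hR, Multiset.count_filter, if_pos hx]
    have hcountRle : ∀ x : G, R.count x ≤ v := by
      intro x
      by_cases hx : x = 0
      · subst hx; rw [hcountR0]; exact Nat.zero_le _
      · rw [hcountRne x hx]; exact hmax' x
    have hcardR : Multiset.card R = Multiset.card S - v := by
      have hsplit := Multiset.filter_add_not (fun x : G => x = 0) S'
      have hcount := congrArg Multiset.card hsplit
      rw [Multiset.card_add] at hcount
      have heq : S'.filter (fun x : G => x = 0) = Multiset.replicate v 0 := by
        have h1 := Multiset.filter_eq' S' (0:G)
        rw [hzero'] at h1
        exact h1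
      rw [heq, Multiset.card_replicate] at hcount
      have : Multiset.card (S'.filter (fun x : G => ¬ x = 0)) = Multiset.card S' - v := by omega
      rw [hR, this, hcardS']
    -- greedy extraction
    have main : ∀ d (W : Multiset G), W ≤ R → W.sum = 0 → Multiset.card W ≤ n - 1 →
        n - v ≤ Multiset.card W + d →
        ∃ U ≤ R, U.sum = 0 ∧ n - v ≤ Multiset.card U ∧ Multiset.card U ≤ n - 1 := by
      intro d
      induction d with
      | zero =>
        intro W h1 h2 h3 h4
        exact ⟨W, h1, h2, by omega, h3⟩
      | succ d ihd =>
        intro W h1 h2 h3 h4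
        by_cases hdone : n - v ≤ Multiset.card W
        · exact ⟨W, h1, h2, hdone, h3⟩
        · push_neg at hdone
          have hcards : Fintype.card G ≤ Multiset.card (R - W) := by
            rw [Multiset.card_sub h1]
            rw [hcardR]
            omega
          have hcnt : ∀ a : G, (R - W).count a ≤ v := fun a =>
            le_trans (Multiset.count_le_of_le a (Multiset.sub_le_self R W)) (hcountRle a)
          obtain ⟨U₀, hU₀le, hU₀ne, hU₀card, hU₀sum⟩ := lemmaA (R - W) v hcnt hcards
          have hU₀R : W + U₀ ≤ R := by
            calc W + U₀ ≤ W + (R - W) := by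
                  exact add_le_add le_rfl hU₀le
            _ = R := by
                  rw [add_comm]
                  exact tsub_add_cancel_of_le h1
          have hU₀pos : 1 ≤ Multiset.card U₀ := by
            rw [Nat.one_le_iff_ne_zero]
            intro hc
            exact hU₀ne (Multiset.card_eq_zero.1 hc)
          refine ihd (W + U₀) hU₀R ?_ ?_ ?_
          · rw [Multiset.sum_add, h2, hU₀sum, add_zero]
          · rw [Multiset.card_add]; omega
          · rw [Multiset.card_add]; omega
    obtain ⟨U, hUle, hUsum, hUge, hUlt⟩ :=
      main (n - v) 0 (Multiset.zero_le R) rfl (by simp) (by simp)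
    set padded : Multiset G := U + Multiset.replicate (n - Multiset.card U) 0 with hpad
    have hUcard_lt : Multiset.card U < n := by omega
    have hpadcard : Multiset.card padded = n := by
      rw [hpad, Multiset.card_add, Multiset.card_replicate]
      omega
    have hpadsum : padded.sum = 0 := by
      rw [hpad, Multiset.sum_add, Multiset.sum_replicate, hUsum]
      simp
    have hpadle : padded ≤ S' := by
      rw [Multiset.le_iff_count]
      intro x
      rw [hpad, Multiset.count_add]
      by_cases hx : x = 0
      · subst hx
        have hU0 : U.count 0 = 0 :=
          Nat.le_zero.1 (hcountR0 ▸ Multiset.count_le_of_le 0 hUle)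
        rw [hU0, Multiset.count_replicate_self, hzero']
        omega
      · rw [Multiset.count_replicate, if_neg (fun hh => hx hh.symm), add_zero]
        calc U.count x ≤ R.count x := Multiset.count_le_of_le x hUle
          _ = S'.count x := hcountRne x hx
    have hmapS : S'.map (fun x => x + c) = S := by
      rw [hS', Multiset.map_map]
      have : ((fun x : G => x + c) ∘ fun x : G => x - c) = id := by
        funext x; simp
      rw [this, Multiset.map_id]
    refine ⟨padded.map (fun x => x + c), ?_, ?_, ?_⟩
    · calc padded.map (fun x => x + c) ≤ S'.map (fun x => x + c) :=
            Multiset.map_le_map hpadle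
      _ = S := hmapS
    · rw [sum_map_add_const, hpadsum, hpadcard, zero_add, hn_def]
      exact AddMonoid.exponent_nsmul_eq_zero c
    · rw [Multiset.card_map, hpadcard]

end Main

theorem stmt_6 (G : Type*) [AddCommGroup G] [Fintype G] :
    egz G ≤ Fintype.card G + AddMonoid.exponent G - 1 := by
  letI : DecidableEq G := Classical.decEq G
  apply Nat.sInf_le
  intro S hS
  exact egz_membership S hS
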